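/- arXiv:2112.08483 — 2 statements merged into one kernel-verified Lean document; each statement's English description precedes it below -/
import Mathlib

section
/- The elements ʲPᵢ = (eʲ)P(eᵢ) of the Clifford algebra satisfy the matrix-unit relation (ʲPᵢ)(ᵏPₗ) = δᵢᵏ (ʲPₗ) for all indices i,j,k,l ∈ {1,…,n}. Consequently the elements ʲPᵢ are linearly independent. -/
noncomputable section

open CliffordAlgebra

variable (F : Type*) [Field F] (V : Type*) [AddCommGroup V] [Module F V]

/-- The quadratic form `Q[v ⊕ α] = α v` on `W = V ⊕ V*`. -/
def Qf : QuadraticForm F (V × Module.Dual F V) where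
  toFun w := w.2 w.1
  toFun_smul a w := by simp [smul_eq_mul, mul_assoc]
  exists_companion' :=
    ⟨LinearMap.mk₂ F (fun w w' => w.2 w'.1 + w'.2 w.1)
      (fun m m' n => by simp; ring) (fun c m n => by simp; ring)
      (fun m n n' => by simp; ring) (fun c m n => by simp; ring),
     fun w w' => by simp; ring⟩

/-- Image of a vector `v ∈ V` in the Clifford algebra. -/
def ιv (v : V) : CliffordAlgebra (Qf F V) := ι (Qf F V) (v, 0)

/-- Image of a covector `α ∈ V*` in the Clifford algebra. -/
def ιd (α : Module.Dual F V) : CliffordAlgebra (Qf F V) := ι (Qf F V) ((0 : V), α)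

lemma Qf_apply (w : V × Module.Dual F V) : Qf F V w = w.2 w.1 := rfl

lemma polar_Qf (w w' : V × Module.Dual F V) :
    QuadraticMap.polar (Qf F V) w w' = w.2 w'.1 + w'.2 w.1 := by
  simp only [QuadraticMap.polar, Qf_apply, Prod.fst_add, Prod.snd_add,
    LinearMap.add_apply, map_add]
  ring

lemma vv (v w : V) : ιv F V v * ιv F V w = -(ιv F V w * ιv F V v) := by
  have h := ι_mul_ι_add_swap (Q := Qf F V) (v, 0) (w, 0)
  rw [polar_Qf] at h
  simp only [LinearMap.zero_apply, add_zero, zero_add, map_zero] at h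
  rw [ιv, ιv]
  exact eq_neg_of_add_eq_zero_left h

lemma dd (α β : Module.Dual F V) : ιd F V α * ιd F V β = -(ιd F V β * ιd F V α) := by
  have h := ι_mul_ι_add_swap (Q := Qf F V) ((0 : V), α) ((0 : V), β)
  rw [polar_Qf] at h
  simp only [map_zero, add_zero, zero_add] at h
  rw [ιd, ιd]
  exact eq_neg_of_add_eq_zero_left h

lemma vd (v : V) (α : Module.Dual F V) :
    ιv F V v * ιd F V α + ιd F V α * ιv F V v = algebraMap F _ (α v) := by
  have h := ι_mul_ι_add_swap (Q := Qf F V) (v, 0) ((0 : V), α)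
  rw [polar_Qf] at h
  simp only [LinearMap.zero_apply, map_zero, add_zero, zero_add] at h
  rw [ιv, ιd]
  exact h

lemma v_sq (v : V) : ιv F V v * ιv F V v = 0 := by
  rw [ιv, ι_sq_scalar, Qf_apply]
  simp

lemma d_sq (α : Module.Dual F V) : ιd F V α * ιd F V α = 0 := by
  rw [ιd, ι_sq_scalar, Qf_apply]
  simp

variable {n : ℕ} (bV : Module.Basis (Fin n) F V)

/-- The fundamental idempotent `P = N̄₁⋯N̄ₙ` with `N̄ⱼ = (eⱼ)(eʲ)`. -/
def Pel : CliffordAlgebra (Qf F V) :=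
  (List.ofFn fun j : Fin n => ιv F V (bV j) * ιd F V (bV.coord j)).prod

/-- The matrix-unit elements `ʲPᵢ = (eʲ)P(eᵢ)`. -/
def mUnit (j i : Fin n) : CliffordAlgebra (Qf F V) :=
  ιd F V (bV.coord j) * Pel F V bV * ιv F V (bV i)

def Nel (k : Fin n) : CliffordAlgebra (Qf F V) :=
  ιv F V (bV k) * ιd F V (bV.coord k)

lemma coord_self (k : Fin n) : bV.coord k (bV k) = 1 := by simp

lemma coord_ne {i k : Fin n} (h : i ≠ k) : bV.coord k (bV i) = 0 := by
  simp [Module.Basis.coord_apply, Finsupp.single_apply, h]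

lemma vd_ne {i k : Fin n} (h : i ≠ k) :
    ιv F V (bV i) * ιd F V (bV.coord k) = -(ιd F V (bV.coord k) * ιv F V (bV i)) := by
  have h1 := vd F V (bV i) (bV.coord k)
  rw [coord_ne F V bV h, map_zero] at h1
  exact eq_neg_of_add_eq_zero_left h1

lemma vd_self (k : Fin n) :
    ιv F V (bV k) * ιd F V (bV.coord k) = 1 - ιd F V (bV.coord k) * ιv F V (bV k) := by
  have h1 := vd F V (bV k) (bV.coord k)
  rw [coord_self F V bV, map_one] at h1
  exact eq_sub_of_add_eq h1

lemma comm_v_N {i k : Fin n} (h : i ≠ k) :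
    Commute (ιv F V (bV i)) (Nel F V bV k) := by
  unfold Commute SemiconjBy Nel
  rw [← mul_assoc, vv, neg_mul, mul_assoc, vd_ne F V bV h]
  simp [mul_assoc]

lemma comm_d_N {j k : Fin n} (h : j ≠ k) :
    Commute (ιd F V (bV.coord j)) (Nel F V bV k) := by
  unfold Commute SemiconjBy Nel
  have h1 : ιd F V (bV.coord j) * ιv F V (bV k) = -(ιv F V (bV k) * ιd F V (bV.coord j)) := by
    have := vd F V (bV k) (bV.coord j)
    rw [coord_ne F V bV (Ne.symm h), map_zero] at this
    exact eq_neg_of_add_eq_zero_right this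
  rw [← mul_assoc, h1, neg_mul, mul_assoc, dd F V (bV.coord j) (bV.coord k)]
  simp [mul_assoc]

lemma comm_N_N {j k : Fin n} (h : j ≠ k) :
    Commute (Nel F V bV j) (Nel F V bV k) :=
  Commute.mul_left (comm_v_N F V bV h) (comm_d_N F V bV h)

lemma aN (k : Fin n) : ιv F V (bV k) * Nel F V bV k = 0 := by
  rw [Nel, ← mul_assoc, v_sq, zero_mul]

lemma Nb (k : Fin n) : Nel F V bV k * ιd F V (bV.coord k) = 0 := by
  rw [Nel, mul_assoc, d_sq, mul_zero]

lemma NN (k : Fin n) : Nel F V bV k * Nel F V bV k = Nel F V bV k := by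
  conv_lhs => rw [Nel, mul_assoc, ← mul_assoc (ιd F V (bV.coord k))]
  have h1 : ιd F V (bV.coord k) * ιv F V (bV k) = 1 - ιv F V (bV k) * ιd F V (bV.coord k) := by
    have := vd F V (bV k) (bV.coord k)
    rw [coord_self F V bV, map_one] at this
    exact eq_sub_of_add_eq' this
  rw [h1]
  rw [sub_mul, one_mul, mul_sub, ← mul_assoc, ← mul_assoc, v_sq]
  simp [Nel]

lemma a_mul_prod {l : List (Fin n)} {i : Fin n} (hi : i ∈ l) :
    ιv F V (bV i) * (l.map (Nel F V bV)).prod = 0 := by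
  induction l with
  | nil => simp at hi
  | cons h t ih =>
    rw [List.map_cons, List.prod_cons, ← mul_assoc]
    rcases eq_or_ne i h with rfl | hne
    · rw [aN, zero_mul]
    · rw [(comm_v_N F V bV hne).eq, mul_assoc,
        ih (List.mem_of_ne_of_mem hne hi), mul_zero]

lemma prod_mul_b {l : List (Fin n)} {j : Fin n} (hj : j ∈ l) (hnd : l.Nodup) :
    (l.map (Nel F V bV)).prod * ιd F V (bV.coord j) = 0 := by
  induction l with
  | nil => simp at hj
  | cons h t ih =>
    rw [List.nodup_cons] at hnd
    rw [List.map_cons, List.prod_cons, mul_assoc]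
    by_cases hjt : j ∈ t
    · rw [ih hjt hnd.2, mul_zero]
    · have hjh : j = h := by
        rcases List.mem_cons.1 hj with h' | h'
        · exact h'
        · exact absurd h' hjt
      subst hjh
      have hc : Commute (ιd F V (bV.coord j)) (t.map (Nel F V bV)).prod := by
        apply Commute.list_prod_right
        intro x hx
        rcases List.mem_map.1 hx with ⟨k, hk, rfl⟩
        exact comm_d_N F V bV (fun e => hjt (e ▸ hk))
      rw [← hc.eq, ← mul_assoc, Nb, zero_mul]

lemma prod_sq {l : List (Fin n)} (hnd : l.Nodup) :
    (l.map (Nel F V bV)).prod * (l.map (Nel F V bV)).prod = (l.map (Nel F V bV)).prod := by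
  induction l with
  | nil => simp
  | cons h t ih =>
    rw [List.nodup_cons] at hnd
    rw [List.map_cons, List.prod_cons]
    have hc : Commute (Nel F V bV h) (t.map (Nel F V bV)).prod := by
      apply Commute.list_prod_right
      intro x hx
      rcases List.mem_map.1 hx with ⟨k, hk, rfl⟩
      exact comm_N_N F V bV (fun e => hnd.1 (e ▸ hk))
    calc Nel F V bV h * (t.map (Nel F V bV)).prod *
          (Nel F V bV h * (t.map (Nel F V bV)).prod)
        = Nel F V bV h * ((t.map (Nel F V bV)).prod * Nel F V bV h) *
          (t.map (Nel F V bV)).prod := by noncomm_ring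
      _ = Nel F V bV h * Nel F V bV h *
          ((t.map (Nel F V bV)).prod * (t.map (Nel F V bV)).prod) := by
          rw [← hc.eq]; noncomm_ring
      _ = Nel F V bV h * (t.map (Nel F V bV)).prod := by rw [NN, ih hnd.2]

lemma Pel_eq : Pel F V bV = ((List.finRange n).map (Nel F V bV)).prod := by
  rw [Pel, List.ofFn_eq_map]; rfl

lemma a_Pel (i : Fin n) : ιv F V (bV i) * Pel F V bV = 0 := by
  rw [Pel_eq]; exact a_mul_prod F V bV (List.mem_finRange i)

lemma Pel_b (j : Fin n) : Pel F V bV * ιd F V (bV.coord j) = 0 := by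
  rw [Pel_eq]; exact prod_mul_b F V bV (List.mem_finRange j) (List.nodup_finRange n)

lemma Pel_sq : Pel F V bV * Pel F V bV = Pel F V bV := by
  rw [Pel_eq]; exact prod_sq F V bV (List.nodup_finRange n)

lemma mUnit_mul (i j k l : Fin n) :
    mUnit F V bV j i * mUnit F V bV k l =
      if i = k then mUnit F V bV j l else 0 := by
  unfold mUnit
  rcases eq_or_ne i k with rfl | hik
  · rw [if_pos rfl]
    have h1 : ιv F V (bV i) * ιd F V (bV.coord i) =
        1 - ιd F V (bV.coord i) * ιv F V (bV i) := vd_self F V bV i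
    calc ιd F V (bV.coord j) * Pel F V bV * ιv F V (bV i) *
          (ιd F V (bV.coord i) * Pel F V bV * ιv F V (bV l))
        = ιd F V (bV.coord j) * Pel F V bV *
            (ιv F V (bV i) * ιd F V (bV.coord i)) * (Pel F V bV * ιv F V (bV l)) := by
          noncomm_ring
      _ = ιd F V (bV.coord j) * (Pel F V bV * Pel F V bV) * ιv F V (bV l) -
          ιd F V (bV.coord j) * (Pel F V bV * ιd F V (bV.coord i)) *
            ((ιv F V (bV i) * Pel F V bV) * ιv F V (bV l)) := by
          rw [h1]; noncomm_ring
      _ = ιd F V (bV.coord j) * Pel F V bV * ιv F V (bV l) := by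
          rw [Pel_sq, Pel_b, a_Pel]; simp
  · rw [if_neg hik]
    have h1 : ιv F V (bV i) * ιd F V (bV.coord k) =
        -(ιd F V (bV.coord k) * ιv F V (bV i)) := vd_ne F V bV hik
    calc ιd F V (bV.coord j) * Pel F V bV * ιv F V (bV i) *
          (ιd F V (bV.coord k) * Pel F V bV * ιv F V (bV l))
        = ιd F V (bV.coord j) * Pel F V bV *
            (ιv F V (bV i) * ιd F V (bV.coord k)) * (Pel F V bV * ιv F V (bV l)) := by
          noncomm_ring
      _ = -(ιd F V (bV.coord j) * (Pel F V bV * ιd F V (bV.coord k)) *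
            ((ιv F V (bV i) * Pel F V bV) * ιv F V (bV l))) := by
          rw [h1]; noncomm_ring
      _ = 0 := by rw [Pel_b, a_Pel]; simp

-- Representation on the exterior algebra

def fmap : (V × Module.Dual F V) →ₗ[F] Module.End F (CliffordAlgebra (0 : QuadraticForm F V)) where
  toFun w := LinearMap.mulLeft F (ι (0 : QuadraticForm F V) w.1) + contractLeft w.2
  map_add' w w' := by
    refine LinearMap.ext fun x => ?_
    simp [LinearMap.mulLeft_apply, add_mul, map_add]
    abel
  map_smul' c w := by
    refine LinearMap.ext fun x => ?_
    simp [LinearMap.mulLeft_apply, smul_mul_assoc]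

lemma fmap_cond (w : V × Module.Dual F V) :
    fmap F V w * fmap F V w = algebraMap F (Module.End F (CliffordAlgebra (0 : QuadraticForm F V))) (Qf F V w) := by
  refine LinearMap.ext fun x => ?_
  rw [Module.End.mul_apply]
  simp only [fmap, LinearMap.coe_mk, AddHom.coe_mk, LinearMap.add_apply,
    LinearMap.mulLeft_apply, map_add, contractLeft_ι_mul, contractLeft_contractLeft,
    Module.algebraMap_end_apply, Qf_apply]
  rw [← mul_assoc, ι_sq_scalar]
  simp only [QuadraticMap.zero_apply, map_zero, zero_mul, zero_add, add_zero, mul_sub]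
  abel

def rep : CliffordAlgebra (Qf F V) →ₐ[F] Module.End F (CliffordAlgebra (0 : QuadraticForm F V)) :=
  lift (Qf F V) ⟨fmap F V, fmap_cond F V⟩

lemma rep_ιv (v : V) :
    rep F V (ιv F V v) = LinearMap.mulLeft F (ι (0 : QuadraticForm F V) v) := by
  rw [ιv, rep, lift_ι_apply]
  simp [fmap]

lemma rep_ιd (α : Module.Dual F V) : rep F V (ιd F V α) = contractLeft α := by
  rw [ιd, rep, lift_ι_apply]
  simp [fmap]

lemma ext_anticomm (a b : V) :
    ι (0 : QuadraticForm F V) a * ι (0 : QuadraticForm F V) b =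
      -(ι (0 : QuadraticForm F V) b * ι (0 : QuadraticForm F V) a) := by
  have h := ι_mul_ι_add_swap (Q := (0 : QuadraticForm F V)) a b
  simp only [QuadraticMap.polar, QuadraticMap.zero_apply, sub_zero, zero_sub, neg_zero,
    map_zero] at h
  exact eq_neg_of_add_eq_zero_left h

def xl (l : List (Fin n)) : CliffordAlgebra (0 : QuadraticForm F V) :=
  (l.map (fun k => ι (0 : QuadraticForm F V) (bV k))).prod

lemma xl_nil : xl F V bV ([] : List (Fin n)) = 1 := by simp [xl]

lemma xl_cons (h : Fin n) (t : List (Fin n)) :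
    xl F V bV (h :: t) = ι (0 : QuadraticForm F V) (bV h) * xl F V bV t := by
  simp [xl]

lemma contract_xl_not_mem {l : List (Fin n)} {k : Fin n} (hk : k ∉ l) :
    contractLeft (bV.coord k) (xl F V bV l) = 0 := by
  induction l with
  | nil => rw [xl_nil]; exact contractLeft_one _ _
  | cons h t ih =>
    rw [xl_cons, contractLeft_ι_mul, ih (fun m => hk (List.mem_cons_of_mem h m)),
      coord_ne F V bV (fun e : h = k => hk (e ▸ List.mem_cons_self (a := h) (l := t)))]
    simp

lemma mul_contract_xl {l : List (Fin n)} {k : Fin n} (hnd : l.Nodup) (hk : k ∈ l) :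
    ι (0 : QuadraticForm F V) (bV k) * contractLeft (bV.coord k) (xl F V bV l) =
      xl F V bV l := by
  induction l with
  | nil => simp at hk
  | cons h t ih =>
    rw [List.nodup_cons] at hnd
    rw [xl_cons, contractLeft_ι_mul]
    rcases eq_or_ne k h with rfl | hne
    · rw [contract_xl_not_mem F V bV hnd.1, coord_self]
      simp [xl_cons]
    · have hkt : k ∈ t := List.mem_of_ne_of_mem hne hk
      rw [coord_ne F V bV (Ne.symm hne)]
      simp only [zero_smul, zero_sub, mul_neg, ← mul_assoc]
      rw [ext_anticomm, neg_mul, neg_neg, mul_assoc, ih hnd.2 hkt]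

lemma rep_N {l : List (Fin n)} {k : Fin n} (hnd : l.Nodup) (hk : k ∈ l) :
    rep F V (Nel F V bV k) (xl F V bV l) = xl F V bV l := by
  rw [Nel, map_mul, Module.End.mul_apply, rep_ιv, rep_ιd, LinearMap.mulLeft_apply]
  exact mul_contract_xl F V bV hnd hk

lemma rep_prod_full (l : List (Fin n)) :
    rep F V ((l.map (Nel F V bV)).prod) (xl F V bV (List.finRange n)) =
      xl F V bV (List.finRange n) := by
  induction l with
  | nil => simp
  | cons h t ih =>
    rw [List.map_cons, List.prod_cons, map_mul, Module.End.mul_apply, ih,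
      rep_N F V bV (List.nodup_finRange n) (List.mem_finRange h)]

lemma rep_Pel :
    rep F V (Pel F V bV) (xl F V bV (List.finRange n)) = xl F V bV (List.finRange n) := by
  rw [Pel_eq]; exact rep_prod_full F V bV _

lemma xl_ne_zero {l : List (Fin n)} (hnd : l.Nodup) : xl F V bV l ≠ 0 := by
  induction l with
  | nil =>
    rw [xl_nil]
    exact one_ne_zero
  | cons h t ih =>
    rw [List.nodup_cons] at hnd
    intro h0
    apply ih hnd.2
    have := congrArg (contractLeft (R := F) (bV.coord h)) h0
    rw [xl_cons, contractLeft_ι_mul, contract_xl_not_mem F V bV hnd.1, coord_self] at this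
    simpa using this

lemma mUnit00_ne {m : ℕ} (bV : Module.Basis (Fin (m + 1)) F V) : mUnit F V bV 0 0 ≠ 0 := by
  set rest : List (Fin (m + 1)) := (List.finRange m).map Fin.succ with hrest
  have hfull : List.finRange (m + 1) = 0 :: rest := List.finRange_succ (n := m)
  have h0rest : (0 : Fin (m + 1)) ∉ rest := by
    simp [hrest]
  have hndrest : rest.Nodup :=
    (List.nodup_finRange m).map (Fin.succ_injective m)
  have hcalc : rep F V (mUnit F V bV 0 0) (xl F V bV rest) = xl F V bV rest := by
    rw [mUnit, map_mul, map_mul, Module.End.mul_apply, Module.End.mul_apply,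
      rep_ιv, LinearMap.mulLeft_apply, ← xl_cons, ← hfull, rep_Pel, hfull,
      rep_ιd, xl_cons, contractLeft_ι_mul, contract_xl_not_mem F V bV h0rest,
      coord_self]
    simp
  intro h0
  rw [h0, map_zero, LinearMap.zero_apply] at hcalc
  exact xl_ne_zero F V bV hndrest hcalc.symm

/-- `(ʲPᵢ)(ᵏPₗ) = δᵢᵏ (ʲPₗ)`, and the `ʲPᵢ` are linearly
independent. -/
theorem stmt8 :
    (∀ i j k l : Fin n,
      mUnit F V bV j i * mUnit F V bV k l =
        if i = k then mUnit F V bV j l else 0) ∧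
    LinearIndependent F (fun p : Fin n × Fin n => mUnit F V bV p.1 p.2) := by
  constructor
  · intro i j k l
    exact mUnit_mul F V bV i j k l
  · cases n with
    | zero => exact linearIndependent_empty_type
    | succ m =>
      rw [Fintype.linearIndependent_iff]
      intro g hg p
      have h1 : ∀ q : Fin (m + 1) × Fin (m + 1),
          mUnit F V bV 0 p.1 * (g q • mUnit F V bV q.1 q.2) * mUnit F V bV p.2 0 =
            if q = p then g p • mUnit F V bV 0 0 else 0 := by
        intro q
        rw [mul_smul_comm, smul_mul_assoc, mUnit_mul F V bV p.1 0 q.1 q.2]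
        rcases eq_or_ne q p with rfl | hqp
        · rw [if_pos rfl, if_pos rfl, mUnit_mul F V bV q.2 0 q.2 0, if_pos rfl]
        · rw [if_neg hqp]
          rcases eq_or_ne p.1 q.1 with h1 | h1
          · rw [if_pos h1, mUnit_mul F V bV q.2 0 p.2 0]
            have : q.2 ≠ p.2 := fun h2 => hqp (Prod.ext (h1.symm) h2)
            rw [if_neg this, smul_zero]
          · rw [if_neg h1, zero_mul, smul_zero]
      have h2 : mUnit F V bV 0 p.1 * (∑ q : Fin (m + 1) × Fin (m + 1),
          g q • mUnit F V bV q.1 q.2) * mUnit F V bV p.2 0 = g p • mUnit F V bV 0 0 := by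
        rw [Finset.mul_sum, Finset.sum_mul, Finset.sum_congr rfl (fun q _ => h1 q)]
        simp
      rw [hg, mul_zero, zero_mul] at h2
      rcases smul_eq_zero.1 h2.symm with h | h
      · exact h
      · exact absurd h (mUnit00_ne F V bV)
end
end

section
/- The element 1_DKP = P + Σᵢ ⁱPᵢ = P + Σᵢ (eⁱ)P(eᵢ) acts as a two-sided identity for the subalgebra generated by the DKP elements b̲ᵅ = (α)P − P(♯α): 1_DKP · b̲ᵅ = b̲ᵅ · 1_DKP = b̲ᵅ for all α ∈ V*. -/
noncomputable section

open CliffordAlgebra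

variable (F : Type*) [Field F] (V : Type*) [AddCommGroup V] [Module F V]

variable {n : ℕ} (bV : Module.Basis (Fin n) F V)

lemma ιv_ιd_anti (v : V) (β : Module.Dual F V) :
    ιv F V v * ιd F V β + ιd F V β * ιv F V v = algebraMap F _ (β v) := by
  have h := CliffordAlgebra.ι_mul_ι_add_swap (Q := Qf F V)
    (v, (0 : Module.Dual F V)) ((0 : V), β)
  have hQ : ∀ w : V × Module.Dual F V, Qf F V w = w.2 w.1 := fun _ => rfl
  have hp : QuadraticMap.polar (Qf F V) (v, (0 : Module.Dual F V)) ((0 : V), β) = β v := by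
    simp [QuadraticMap.polar, hQ]
  rw [hp] at h
  exact h

lemma anti' (v : V) (β : Module.Dual F V) (x : CliffordAlgebra (Qf F V)) :
    ιv F V v * (ιd F V β * x) = β v • x - ιd F V β * (ιv F V v * x) := by
  have h : ιv F V v * ιd F V β = algebraMap F _ (β v) - ιd F V β * ιv F V v :=
    eq_sub_of_add_eq (ιv_ιd_anti F V v β)
  calc ιv F V v * (ιd F V β * x) = (ιv F V v * ιd F V β) * x := by rw [mul_assoc]
    _ = (algebraMap F _ (β v) - ιd F V β * ιv F V v) * x := by rw [h]
    _ = β v • x - ιd F V β * (ιv F V v * x) := by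
        rw [sub_mul, mul_assoc, Algebra.smul_def]

/-- `ιd` as a linear map. -/
def ιdL : Module.Dual F V →ₗ[F] CliffordAlgebra (Qf F V) :=
  (ι (Qf F V)).comp (LinearMap.inr F V (Module.Dual F V))

/-- `ιv` as a linear map. -/
def ιvL : V →ₗ[F] CliffordAlgebra (Qf F V) :=
  (ι (Qf F V)).comp (LinearMap.inl F V (Module.Dual F V))

lemma ιd_eq (α : Module.Dual F V) : ιd F V α = ιdL F V α := rfl
lemma ιv_eq (v : V) : ιv F V v = ιvL F V v := rfl

/-- `1_DKP = P + Σᵢ (eⁱ)P(eᵢ)` is a two-sided identity for the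
DKP generators `b̲ᵅ = (α)P − P(♯α)`. -/
theorem stmt15 (g : LinearMap.BilinForm F V) (sharp : Module.Dual F V ≃ₗ[F] V)
    (hgsymm : ∀ v w : V, g v w = g w v)
    (hsharp : ∀ (α : Module.Dual F V) (v : V), g (sharp α) v = α v)
    (P : CliffordAlgebra (Qf F V))
    (hP2 : P * P = P)
    (hPd : ∀ ρ : Module.Dual F V, P * ιd F V ρ = 0)
    (hvP : ∀ v : V, ιv F V v * P = 0) :
    letI oneDKP : CliffordAlgebra (Qf F V) :=
      P + ∑ i : Fin n, ιd F V (bV.coord i) * P * ιv F V (bV i)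
    ∀ α : Module.Dual F V,
      oneDKP * (ιd F V α * P - P * ιv F V (sharp α)) =
        ιd F V α * P - P * ιv F V (sharp α) ∧
      (ιd F V α * P - P * ιv F V (sharp α)) * oneDKP =
        ιd F V α * P - P * ιv F V (sharp α) := by
  intro α
  have hPd' : ∀ (ρ : Module.Dual F V) (x : CliffordAlgebra (Qf F V)),
      P * (ιd F V ρ * x) = 0 := fun ρ x => by rw [← mul_assoc, hPd, zero_mul]
  have hvP' : ∀ (v : V) (x : CliffordAlgebra (Qf F V)),
      ιv F V v * (P * x) = 0 := fun v x => by rw [← mul_assoc, hvP, zero_mul]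
  have sum1 : ∑ i : Fin n, α (bV i) • ιd F V (bV.coord i) = ιd F V α := by
    have h := congrArg (ιdL F V) (bV.sum_dual_apply_smul_coord α)
    rw [map_sum] at h
    simp only [map_smul] at h
    simpa only [ιd_eq] using h
  have sum2 : ∑ i : Fin n, bV.coord i (sharp α) • ιv F V (bV i) = ιv F V (sharp α) := by
    have h := congrArg (ιvL F V) (bV.sum_repr (sharp α))
    rw [map_sum] at h
    simp only [map_smul] at h
    simpa only [ιv_eq, Module.Basis.coord_apply] using h
  constructor
  · show (P + ∑ i : Fin n, ιd F V (bV.coord i) * P * ιv F V (bV i)) *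
        (ιd F V α * P - P * ιv F V (sharp α)) = _
    rw [add_mul, Finset.sum_mul]
    have hterm : ∀ i ∈ Finset.univ, (ιd F V (bV.coord i) * P * ιv F V (bV i)) *
        (ιd F V α * P - P * ιv F V (sharp α))
          = α (bV i) • (ιd F V (bV.coord i) * P) := by
      intro i _
      simp only [mul_sub, mul_assoc, anti', hvP, hvP', mul_zero, sub_zero, mul_smul_comm]
      rw [hP2]
    rw [Finset.sum_congr rfl hterm]
    have hsum : ∑ i : Fin n, α (bV i) • (ιd F V (bV.coord i) * P) = ιd F V α * P := by
      simp only [← smul_mul_assoc, ← Finset.sum_mul, sum1]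
    rw [hsum, mul_sub, ← mul_assoc, hPd, zero_mul, ← mul_assoc, hP2, zero_sub]
    abel
  · show (ιd F V α * P - P * ιv F V (sharp α)) *
        (P + ∑ i : Fin n, ιd F V (bV.coord i) * P * ιv F V (bV i)) = _
    rw [mul_add, Finset.mul_sum]
    have hterm : ∀ i ∈ Finset.univ, (ιd F V α * P - P * ιv F V (sharp α)) *
        (ιd F V (bV.coord i) * P * ιv F V (bV i))
          = -(bV.coord i (sharp α) • (P * ιv F V (bV i))) := by
      intro i _
      simp only [sub_mul, mul_assoc, hPd', mul_zero, zero_sub, anti', hvP', sub_zero,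
        mul_smul_comm, neg_inj]
      rw [← mul_assoc, hP2]
    rw [Finset.sum_congr rfl hterm]
    have hsum : ∑ i : Fin n, -(bV.coord i (sharp α) • (P * ιv F V (bV i)))
        = -(P * ιv F V (sharp α)) := by
      rw [Finset.sum_neg_distrib, neg_inj]
      simp only [← mul_smul_comm, ← Finset.mul_sum, sum2]
    rw [hsum, sub_mul, mul_assoc, hP2]
    have : P * ιv F V (sharp α) * P = 0 := by
      rw [mul_assoc, hvP, mul_zero]
    rw [this, sub_zero]
    abel
end
end
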